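/- arXiv:1912.02000 — 6 statements merged into one kernel-verified Lean document; each statement's English description precedes it below -/
import Mathlib

section
/- In the coordination game, a configuration x* is a pure Nash equilibrium if and only if: for every player i with x*_i = +1, r_i ≤ z̃(x*) − 1/(n−1), and for every player i with x*_i = −1, r_i ≥ z̃(x*), where z̃(x*) = |{j : x*_j = +1}|/(n−1). -/
open Finset

/-- Coordination game utility. -/
def coordU {n : ℕ} (d : Fin n → ℝ) (i : Fin n) (x : Fin n → ℝ) : ℝ :=
  ∑ j ∈ Finset.univ.erase i, x i * x j - d i * x i

/-- z̃(x) = |{j : x_j = +1}| / (n−1). -/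
noncomputable def ztilde (n : ℕ) (x : Fin n → ℝ) : ℝ :=
  ({j : Fin n | x j = 1}.ncard : ℝ) / ((n : ℝ) - 1)

/-- Characterization of Nash equilibria of the coordination game in terms of
thresholds r_i = 1/2 + d_i/(2(n−1)). -/
theorem coord_nash_characterization {n : ℕ} (hn : 2 ≤ n) (d : Fin n → ℝ)
    (r : Fin n → ℝ) (hr : ∀ i, r i = 1/2 + d i / (2 * ((n : ℝ) - 1)))
    (x : Fin n → ℝ) (hx : ∀ i, x i = 1 ∨ x i = -1) :
    (∀ (i : Fin n) (y : ℝ), (y = 1 ∨ y = -1) →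
        coordU d i (Function.update x i y) ≤ coordU d i x) ↔
      ((∀ i, x i = 1 → r i ≤ ztilde n x - 1 / ((n : ℝ) - 1)) ∧
       (∀ i, x i = -1 → r i ≥ ztilde n x)) := by
  have hn2 : (2:ℝ) ≤ (n:ℝ) := by exact_mod_cast hn
  have hpos : (0:ℝ) < (n:ℝ) - 1 := by linarith
  set S : Fin n → ℝ := fun i => ∑ j ∈ Finset.univ.erase i, x j with hSdef
  have hcoordU : ∀ (i : Fin n) (y : ℝ),
      coordU d i (Function.update x i y) = y * S i - d i * y := by
    intro i y
    unfold coordU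
    rw [Function.update_self]
    have : ∑ j ∈ Finset.univ.erase i, y * Function.update x i y j
        = ∑ j ∈ Finset.univ.erase i, y * x j := by
      apply Finset.sum_congr rfl
      intro j hj
      rw [Function.update_of_ne (Finset.ne_of_mem_erase hj)]
    rw [this, ← Finset.mul_sum]
  have hx0 : ∀ i : Fin n, coordU d i x = x i * S i - d i * x i := by
    intro i
    have := hcoordU i (x i)
    rwa [Function.update_eq_self] at this
  have key : (∀ (i : Fin n) (y : ℝ), (y = 1 ∨ y = -1) →
        coordU d i (Function.update x i y) ≤ coordU d i x)
      ↔ ∀ i, 0 ≤ x i * (S i - d i) := by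
    constructor
    · intro h i
      have h1 := h i (-(x i)) (by rcases hx i with h|h <;> simp [h])
      rw [hcoordU, hx0 i] at h1
      nlinarith [h1]
    · intro h i y hy
      rw [hcoordU, hx0 i]
      have hi := h i
      rcases hx i with hxi|hxi <;> rcases hy with hy|hy <;>
        rw [hxi, hy] <;> rw [hxi] at hi <;> nlinarith [hi]
  rw [key]
  -- set of +1 players
  set Kf : Finset (Fin n) := Finset.univ.filter (fun j => x j = 1) with hKf
  have hz : ztilde n x = (Kf.card : ℝ) / ((n:ℝ) - 1) := by
    unfold ztilde
    congr 2
    rw [show {j : Fin n | x j = 1} = ↑Kf from by ext j; simp [hKf]]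
    rw [Set.ncard_coe_finset]
  have hScard : ∀ i : Fin n,
      S i = 2 * (((Finset.univ.erase i).filter (fun j => x j = 1)).card : ℝ)
        - ((n:ℝ) - 1) := by
    intro i
    have h1 : S i = ∑ j ∈ Finset.univ.erase i,
        ((if x j = 1 then (2:ℝ) else 0) - 1) := by
      apply Finset.sum_congr rfl
      intro j _
      rcases hx j with h|h <;> norm_num [h]
    rw [h1, Finset.sum_sub_distrib, ← Finset.sum_filter, Finset.sum_const,
      Finset.sum_const, Finset.card_erase_of_mem (Finset.mem_univ i),
      Finset.card_univ, Fintype.card_fin, nsmul_eq_mul, nsmul_eq_mul, mul_one]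
    have hc : ((n - 1 : ℕ) : ℝ) = (n:ℝ) - 1 := by
      rw [Nat.cast_sub (by omega)]; norm_num
    rw [hc]; ring
  have hfe : ∀ i : Fin n,
      (Finset.univ.erase i).filter (fun j => x j = 1) = Kf.erase i := by
    intro i
    rw [hKf, Finset.filter_erase]
  have hcard1 : ∀ i : Fin n, x i = 1 →
      (((Finset.univ.erase i).filter (fun j => x j = 1)).card : ℝ)
        = (Kf.card : ℝ) - 1 := by
    intro i hi
    have hiK : i ∈ Kf := by simp [hKf, hi]
    rw [hfe i, Finset.card_erase_of_mem hiK,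
      Nat.cast_sub (Finset.one_le_card.mpr ⟨i, hiK⟩)]
    norm_num
  have hcard2 : ∀ i : Fin n, x i = -1 →
      (((Finset.univ.erase i).filter (fun j => x j = 1)).card : ℝ)
        = (Kf.card : ℝ) := by
    intro i hi
    have hiK : i ∉ Kf := by
      simp only [hKf, Finset.mem_filter, Finset.mem_univ, true_and]
      rw [hi]; norm_num
    rw [hfe i, Finset.erase_eq_of_notMem hiK]
  have h2pos : (0:ℝ) < 2*((n:ℝ)-1) := by linarith
  have heq1 : ∀ i : Fin n,
      ztilde n x - 1/((n:ℝ)-1) - r i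
        = (2*((Kf.card:ℝ)-1) - ((n:ℝ)-1) - d i) / (2*((n:ℝ)-1)) := by
    intro i
    rw [hr i, hz]
    field_simp
    ring
  have heq2 : ∀ i : Fin n,
      r i - ztilde n x
        = (d i + ((n:ℝ)-1) - 2*(Kf.card:ℝ)) / (2*((n:ℝ)-1)) := by
    intro i
    rw [hr i, hz]
    field_simp
    ring
  constructor
  · intro h
    constructor
    · intro i hi
      have hki := h i
      rw [hi, one_mul, hScard i, hcard1 i hi] at hki
      have : 0 ≤ ztilde n x - 1/((n:ℝ)-1) - r i := by
        rw [heq1 i]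
        exact div_nonneg (by linarith) (le_of_lt h2pos)
      linarith
    · intro i hi
      have hki := h i
      rw [hi, hScard i, hcard2 i hi] at hki
      have : 0 ≤ r i - ztilde n x := by
        rw [heq2 i]
        exact div_nonneg (by linarith) (le_of_lt h2pos)
      linarith
  · intro ⟨h1, h2⟩ i
    rcases hx i with hi|hi
    · have hnn : 0 ≤ ztilde n x - 1/((n:ℝ)-1) - r i := by linarith [h1 i hi]
      rw [heq1 i] at hnn
      have := mul_nonneg hnn (le_of_lt h2pos)
      rw [div_mul_cancel₀ _ (ne_of_gt h2pos)] at this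
      rw [hi, one_mul, hScard i, hcard1 i hi]
      linarith
    · have hnn : 0 ≤ r i - ztilde n x := by linarith [h2 i hi]
      rw [heq2 i] at hnn
      have := mul_nonneg hnn (le_of_lt h2pos)
      rw [div_mul_cancel₀ _ (ne_of_gt h2pos)] at this
      rw [hi, hScard i, hcard2 i hi]
      nlinarith [this]
end

section
/- In the anti-coordination game, a configuration x* is a pure Nash equilibrium if and only if: for every player i with x*_i = +1, r_i ≥ z̃(x*) − 1/(n−1), and for every player i with x*_i = −1, r_i ≤ z̃(x*), where z̃(x*) = |{j : x*_j = +1}|/(n−1). -/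
open Finset

/-- Anti-coordination game utility. -/
def antiCoordU {n : ℕ} (d : Fin n → ℝ) (i : Fin n) (x : Fin n → ℝ) : ℝ :=
  -(∑ j ∈ Finset.univ.erase i, x i * x j - d i * x i)

/-- Characterization of Nash equilibria of the anti-coordination game. -/
theorem antiCoord_nash_characterization {n : ℕ} (hn : 2 ≤ n) (d : Fin n → ℝ)
    (r : Fin n → ℝ) (hr : ∀ i, r i = 1/2 + d i / (2 * ((n : ℝ) - 1)))
    (x : Fin n → ℝ) (hx : ∀ i, x i = 1 ∨ x i = -1) :
    (∀ (i : Fin n) (y : ℝ), (y = 1 ∨ y = -1) →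
        antiCoordU d i (Function.update x i y) ≤ antiCoordU d i x) ↔
      ((∀ i, x i = 1 → r i ≥ ztilde n x - 1 / ((n : ℝ) - 1)) ∧
       (∀ i, x i = -1 → r i ≤ ztilde n x)) := by
  have hpos : (0:ℝ) < (n:ℝ) - 1 := by
    have : (2:ℝ) ≤ (n:ℝ) := by exact_mod_cast hn
    linarith
  set k : ℕ := (univ.filter (fun j => x j = 1)).card with hk
  have hz : ztilde n x = (k:ℝ) / ((n:ℝ) - 1) := by
    unfold ztilde
    congr 2
    rw [show {j : Fin n | x j = 1} = ↑(univ.filter (fun j => x j = 1)) by ext j; simp]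
    rw [Set.ncard_coe_finset]
  have hsum : ∑ j, x j = 2*(k:ℝ) - n := by
    have h1 : ∀ j ∈ (univ : Finset (Fin n)), x j = (if x j = 1 then (2:ℝ) else 0) - 1 := by
      intro j _; rcases hx j with h|h <;> rw [h] <;> norm_num
    rw [Finset.sum_congr rfl h1, Finset.sum_sub_distrib, Finset.sum_ite, Finset.sum_const,
      Finset.sum_const, Finset.sum_const]
    simp [← hk, mul_comm]
  have hS : ∀ i, ∑ j ∈ univ.erase i, x j = 2*(k:ℝ) - n - x i := by
    intro i
    have h := Finset.add_sum_erase univ x (mem_univ i)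
    rw [hsum] at h
    linarith
  have hU : ∀ (i : Fin n) (y : ℝ),
      antiCoordU d i (Function.update x i y) = y * (d i - (2*(k:ℝ) - n - x i)) := by
    intro i y
    unfold antiCoordU
    have h1 : ∀ j ∈ univ.erase i,
        Function.update x i y i * Function.update x i y j = y * x j := by
      intro j hj
      rw [Function.update_self, Function.update_of_ne (Finset.ne_of_mem_erase hj)]
    rw [Finset.sum_congr rfl h1, ← Finset.mul_sum, hS i, Function.update_self]
    ring
  have hUx : ∀ i : Fin n, antiCoordU d i x = x i * (d i - (2*(k:ℝ) - n - x i)) := by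
    intro i
    have h := hU i (x i)
    rwa [Function.update_eq_self] at h
  have hd : ∀ i, d i = 2*((n:ℝ)-1)*r i - ((n:ℝ)-1) := by
    intro i; rw [hr i]; field_simp; ring
  rw [← forall_and]
  refine forall_congr' (fun i => ?_)
  constructor
  · intro h
    rcases hx i with h1 | h1
    · constructor
      · intro _
        have h2 := h (-1) (Or.inr rfl)
        rw [hU, hUx, h1, hd i] at h2
        rw [hz, ge_iff_le, div_sub_div_same, div_le_iff₀ hpos]
        nlinarith [h2]
      · intro h2; rw [h1] at h2; norm_num at h2
    · constructor
      · intro h2; rw [h1] at h2; norm_num at h2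
      · intro _
        have h2 := h 1 (Or.inl rfl)
        rw [hU, hUx, h1, hd i] at h2
        rw [hz, le_div_iff₀ hpos]
        nlinarith [h2]
  · rintro ⟨ha, hb⟩ y hy
    rw [hU, hUx]
    rcases hx i with h1 | h1
    · have h2 := ha h1
      rw [hz, ge_iff_le, div_sub_div_same, div_le_iff₀ hpos] at h2
      rw [h1, hd i]
      rcases hy with hy | hy <;> rw [hy] <;> nlinarith
    · have h2 := hb h1
      rw [hz, le_div_iff₀ hpos] at h2
      rw [h1, hd i]
      rcases hy with hy | hy <;> rw [hy] <;> nlinarith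
end

section
/- In the mixed coordination/anti-coordination game, a configuration x is a pure Nash equilibrium if and only if: r_i ≤ z̃(x) − 1/(n−1) for every coordinating i with x_i = +1; r_i ≥ z̃(x) for every coordinating i with x_i = −1; r_i ≥ z̃(x) − 1/(n−1) for every anti-coordinating i with x_i = +1; and r_i ≤ z̃(x) for every anti-coordinating i with x_i = −1. -/
open Finset

/-- Mixed CAC game utility: u_i(x) = δ_i(Σ_{j≠i} x_i x_j − d_i x_i), with
δ_i = +1 for coordinating agents (i ∈ Vc) and δ_i = −1 otherwise. -/
def mixedU {n : ℕ} (Vc : Finset (Fin n)) (d : Fin n → ℝ) (i : Fin n) (x : Fin n → ℝ) : ℝ :=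
  (if i ∈ Vc then (1 : ℝ) else -1) * (∑ j ∈ Finset.univ.erase i, x i * x j - d i * x i)

/-- Characterization of Nash equilibria of the mixed
coordination/anti-coordination game. -/
theorem mixed_nash_characterization {n : ℕ} (hn : 2 ≤ n)
    (Vc : Finset (Fin n)) (d : Fin n → ℝ)
    (r : Fin n → ℝ) (hr : ∀ i, r i = 1/2 + d i / (2 * ((n : ℝ) - 1)))
    (x : Fin n → ℝ) (hx : ∀ i, x i = 1 ∨ x i = -1) :
    (∀ (i : Fin n) (y : ℝ), (y = 1 ∨ y = -1) →
        mixedU Vc d i (Function.update x i y) ≤ mixedU Vc d i x) ↔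
      ((∀ i ∈ Vc, x i = 1 → r i ≤ ztilde n x - 1 / ((n : ℝ) - 1)) ∧
       (∀ i ∈ Vc, x i = -1 → r i ≥ ztilde n x) ∧
       (∀ i, i ∉ Vc → x i = 1 → r i ≥ ztilde n x - 1 / ((n : ℝ) - 1)) ∧
       (∀ i, i ∉ Vc → x i = -1 → r i ≤ ztilde n x)) := by
  have hn1 : (0:ℝ) < (n:ℝ) - 1 := by
    have : (2:ℝ) ≤ (n:ℝ) := by exact_mod_cast hn
    linarith
  have hne : ((n:ℝ) - 1) ≠ 0 := ne_of_gt hn1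
  have hc2 : (0:ℝ) < 2 * ((n:ℝ) - 1) := by linarith
  set m : ℝ := (({j : Fin n | x j = 1}.ncard : ℝ)) with hm
  have hz : ztilde n x = m / ((n:ℝ) - 1) := rfl
  -- total sum
  have hset : {j : Fin n | x j = 1} = ↑(Finset.univ.filter (fun j => x j = 1)) := by
    ext j; simp
  have hmcard : m = ((Finset.univ.filter (fun j => x j = 1)).card : ℝ) := by
    rw [hm, hset, Set.ncard_coe_finset]
  have hT : ∑ j, x j = 2 * m - n := by
    have hsplit := Finset.sum_filter_add_sum_filter_not Finset.univ (fun j => x j = 1) x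
    have h1 : ∑ j ∈ Finset.univ.filter (fun j => x j = 1), x j
        = ((Finset.univ.filter (fun j => x j = 1)).card : ℝ) := by
      rw [Finset.sum_congr rfl (fun j hj => (Finset.mem_filter.mp hj).2)]
      simp
    have h2 : ∑ j ∈ Finset.univ.filter (fun j => ¬ x j = 1), x j
        = -((Finset.univ.filter (fun j => ¬ x j = 1)).card : ℝ) := by
      rw [Finset.sum_congr rfl
        (fun j hj => (hx j).resolve_left (Finset.mem_filter.mp hj).2)]
      simp
    have hc : (Finset.univ.filter (fun j => x j = 1)).card
        + (Finset.univ.filter (fun j => ¬ x j = 1)).card = n := by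
      rw [Finset.card_filter_add_card_filter_not]
      simp
    have hcr : ((Finset.univ.filter (fun j => x j = 1)).card : ℝ)
        + ((Finset.univ.filter (fun j => ¬ x j = 1)).card : ℝ) = (n:ℝ) := by
      exact_mod_cast congrArg (Nat.cast : ℕ → ℝ) hc
    rw [← hsplit, h1, h2, hmcard]
    linarith
  -- utility after update
  have hU : ∀ (i : Fin n) (y : ℝ), mixedU Vc d i (Function.update x i y)
      = (if i ∈ Vc then (1:ℝ) else -1) * (y * ((2*m - n - x i) - d i)) := by
    intro i y
    unfold mixedU
    have hs : ∑ j ∈ Finset.univ.erase i, Function.update x i y i * Function.update x i y j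
        = y * (2*m - n - x i) := by
      rw [Finset.sum_congr rfl (fun j hj => by
        rw [Function.update_self, Function.update_of_ne (Finset.mem_erase.mp hj).1])]
      rw [← Finset.mul_sum, Finset.sum_erase_eq_sub (Finset.mem_univ i), hT]
    rw [hs, Function.update_self]
    ring_nf
  have hUx : ∀ (i : Fin n), mixedU Vc d i x
      = (if i ∈ Vc then (1:ℝ) else -1) * (x i * ((2*m - n - x i) - d i)) := by
    intro i
    have := hU i (x i)
    rwa [Function.update_eq_self] at this
  -- pointwise Nash condition
  have hkey : ∀ i : Fin n,
      (∀ y : ℝ, (y = 1 ∨ y = -1) →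
        mixedU Vc d i (Function.update x i y) ≤ mixedU Vc d i x) ↔
      0 ≤ (if i ∈ Vc then (1:ℝ) else -1) * (x i * ((2*m - n - x i) - d i)) := by
    intro i
    constructor
    · intro h
      have h2 := h (-(x i)) (by rcases hx i with h' | h' <;> rw [h'] <;> simp)
      rw [hU, hUx] at h2
      by_cases hc : i ∈ Vc <;> simp only [hc, if_true, if_false] at h2 ⊢ <;> nlinarith
    · intro h y hy
      rw [hU, hUx]
      rcases hx i with hxi | hxi <;> rcases hy with hy | hy <;>
        rw [hxi] at h ⊢ <;> rw [hy] <;>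
        by_cases hc : i ∈ Vc <;> simp only [hc, if_true, if_false] at h ⊢ <;> nlinarith
  -- arithmetic equivalences
  have e1 : ∀ i : Fin n, (1/2 + d i / (2 * ((n:ℝ) - 1))) * (2 * ((n:ℝ) - 1))
      = ((n:ℝ) - 1) + d i := by
    intro i; field_simp
  have e2 : (m / ((n:ℝ) - 1)) * (2 * ((n:ℝ) - 1)) = 2 * m := by
    field_simp
  have e3 : ((m - 1) / ((n:ℝ) - 1)) * (2 * ((n:ℝ) - 1)) = 2 * m - 2 := by
    field_simp
  have hzz : ztilde n x - 1 / ((n:ℝ) - 1) = (m - 1) / ((n:ℝ) - 1) := by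
    rw [hz, div_sub_div_same]
  have harith1 : ∀ i : Fin n, x i = 1 →
      (0 ≤ (2*m - n - x i) - d i ↔ r i ≤ ztilde n x - 1 / ((n:ℝ) - 1)) := by
    intro i hxi
    rw [hxi, hr, hzz]
    constructor
    · intro h; rw [← mul_le_mul_iff_of_pos_right hc2, e1 i, e3]; linarith
    · intro h; rw [← mul_le_mul_iff_of_pos_right hc2, e1 i, e3] at h; linarith
  have harith2 : ∀ i : Fin n, x i = -1 →
      (0 ≤ -((2*m - n - x i) - d i) ↔ r i ≥ ztilde n x) := by
    intro i hxi
    rw [hxi, hr, hz, ge_iff_le]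
    constructor
    · intro h; rw [← mul_le_mul_iff_of_pos_right hc2, e1 i, e2]; linarith
    · intro h; rw [← mul_le_mul_iff_of_pos_right hc2, e1 i, e2] at h; linarith
  have harith3 : ∀ i : Fin n, x i = 1 →
      (0 ≤ -((2*m - n - x i) - d i) ↔ r i ≥ ztilde n x - 1 / ((n:ℝ) - 1)) := by
    intro i hxi
    rw [hxi, hr, hzz, ge_iff_le]
    constructor
    · intro h; rw [← mul_le_mul_iff_of_pos_right hc2, e1 i, e3]; linarith
    · intro h; rw [← mul_le_mul_iff_of_pos_right hc2, e1 i, e3] at h; linarith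
  have harith4 : ∀ i : Fin n, x i = -1 →
      (0 ≤ (2*m - n - x i) - d i ↔ r i ≤ ztilde n x) := by
    intro i hxi
    rw [hxi, hr, hz]
    constructor
    · intro h; rw [← mul_le_mul_iff_of_pos_right hc2, e1 i, e2]; linarith
    · intro h; rw [← mul_le_mul_iff_of_pos_right hc2, e1 i, e2] at h; linarith
  rw [forall_congr' (fun i => hkey i)]
  constructor
  · intro h
    refine ⟨fun i hi hxi => ?_, fun i hi hxi => ?_, fun i hi hxi => ?_, fun i hi hxi => ?_⟩
    · have hh := h i; simp only [hi, if_true] at hh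
      exact (harith1 i hxi).mp (by rw [hxi] at hh ⊢; linarith)
    · have hh := h i; simp only [hi, if_true] at hh
      exact (harith2 i hxi).mp (by rw [hxi] at hh ⊢; linarith)
    · have hh := h i; simp only [hi, if_false] at hh
      exact (harith3 i hxi).mp (by rw [hxi] at hh ⊢; linarith)
    · have hh := h i; simp only [hi, if_false] at hh
      exact (harith4 i hxi).mp (by rw [hxi] at hh ⊢; linarith)
  · rintro ⟨h1, h2, h3, h4⟩ i
    by_cases hi : i ∈ Vc <;> simp only [hi, if_true, if_false]
    · rcases hx i with hxi | hxi
      · have := (harith1 i hxi).mpr (h1 i hi hxi); rw [hxi] at this ⊢; linarith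
      · have := (harith2 i hxi).mpr (h2 i hi hxi); rw [hxi] at this ⊢; linarith
    · rcases hx i with hxi | hxi
      · have := (harith3 i hxi).mpr (h3 i hi hxi); rw [hxi] at this ⊢; linarith
      · have := (harith4 i hxi).mpr (h4 i hi hxi); rw [hxi] at this ⊢; linarith
end

section
/- In the coordination game on n players with thresholds r_i = (i−1)/(n−1) for i = 1, …, n, every value z ∈ {0, 1/n, …, 1} satisfies z = F_c((n/(n−1))(z − ε)) for all ε ∈ (0, 1/n]; consequently the game admits exactly n+1 pure Nash equilibria. -/
open Finset

lemma card_filter_lt_fin {n k : ℕ} (hk : k ≤ n) :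
    (Finset.univ.filter (fun i : Fin n => (i:ℕ) < k)).card = k := by
  have : (Finset.univ.filter (fun i : Fin n => (i:ℕ) < k))
      = (univ : Finset (Fin k)).map (Fin.castLEEmb hk) := by
    ext i
    simp only [mem_filter, mem_univ, true_and, mem_map, Fin.castLEEmb, Function.Embedding.coeFn_mk]
    constructor
    · intro h; exact ⟨⟨i, h⟩, Fin.ext rfl⟩
    · rintro ⟨a, rfl⟩; exact a.isLt
  rw [this, card_map, card_univ, Fintype.card_fin]

lemma coordU_eq {n : ℕ} (d : Fin n → ℝ) (i : Fin n) (x : Fin n → ℝ) :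
    coordU d i x = x i * ((∑ j, x j) - x i) - d i * x i := by
  unfold coordU
  rw [← Finset.mul_sum, Finset.sum_erase_eq_sub (mem_univ i)]

lemma coordU_update {n : ℕ} (d : Fin n → ℝ) (i : Fin n) (x : Fin n → ℝ) (y : ℝ) :
    coordU d i (Function.update x i y) = y * ((∑ j, x j) - x i) - d i * y := by
  unfold coordU
  rw [Function.update_self]
  rw [Finset.sum_congr rfl (fun j hj => by
    rw [Function.update_of_ne (Finset.ne_of_mem_erase hj)])]
  rw [← Finset.mul_sum, Finset.sum_erase_eq_sub (mem_univ i)]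

lemma equi_iff {n : ℕ} (d : Fin n → ℝ) (x : Fin n → ℝ) (hpm : ∀ i, x i = 1 ∨ x i = -1) :
    (∀ (i : Fin n) (y : ℝ), (y = 1 ∨ y = -1) →
        coordU d i (Function.update x i y) ≤ coordU d i x) ↔
    ∀ i, 0 ≤ x i * ((∑ j, x j) - x i - d i) := by
  constructor
  · intro h i
    have hy : -x i = 1 ∨ -x i = -1 := by rcases hpm i with h' | h' <;> simp [h']
    have := h i (-x i) hy
    rw [coordU_update, coordU_eq] at this
    nlinarith [this]
  · intro h i y hy
    rw [coordU_update, coordU_eq]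
    rcases hy with rfl | rfl <;> rcases hpm i with h' | h' <;>
      have := h i <;> rw [h'] at this ⊢ <;> nlinarith [this]

open scoped Classical in
lemma sum_pm {n : ℕ} (x : Fin n → ℝ) (hpm : ∀ i, x i = 1 ∨ x i = -1) :
    ∑ j, x j = 2 * ((Finset.univ.filter (fun i => x i = 1)).card : ℝ) - n := by
  have h1 : ∑ j ∈ Finset.univ.filter (fun i => x i = 1), x j
      = ((Finset.univ.filter (fun i => x i = 1)).card : ℝ) := by
    rw [Finset.sum_congr rfl (fun j hj => (Finset.mem_filter.mp hj).2)]
    simp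
  have h2 : ∑ j ∈ Finset.univ.filter (fun i => ¬ x i = 1), x j
      = -((Finset.univ.filter (fun i => ¬ x i = 1)).card : ℝ) := by
    rw [Finset.sum_congr rfl (fun j hj => (hpm j).resolve_left (Finset.mem_filter.mp hj).2)]
    simp
  have hc : (Finset.univ.filter (fun i => x i = 1)).card
      + (Finset.univ.filter (fun i => ¬ x i = 1)).card = n := by
    rw [Finset.card_filter_add_card_filter_not]; simp
  have hsum := Finset.sum_filter_add_sum_filter_not Finset.univ (fun i => x i = 1) x
  have hcR : ((Finset.univ.filter (fun i => x i = 1)).card : ℝ)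
      + ((Finset.univ.filter (fun i => ¬ x i = 1)).card : ℝ) = n := by
    exact_mod_cast congrArg (Nat.cast : ℕ → ℝ) hc
  linarith [hsum, h1, h2, hcR]

/-- Coordination game with thresholds r_i = (i−1)/(n−1), i = 1,…,n (here
indexed i = 0,…,n−1 with r_i = i/(n−1), corresponding to weights
d_i = 2i − (n−1)): every z ∈ {0,1/n,…,1} satisfies the equilibrium equation
z = F_c((n/(n−1))(z−ε)) for all ε ∈ (0,1/n], and the game admits exactly
n+1 pure Nash equilibria. -/
theorem coord_uniform_thresholds {n : ℕ} (hn : 2 ≤ n)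
    (r : Fin n → ℝ) (hr : ∀ i, r i = (i : ℝ) / ((n : ℝ) - 1))
    (d : Fin n → ℝ) (hd : ∀ i, d i = 2 * (i : ℝ) - ((n : ℝ) - 1))
    (Fc : ℝ → ℝ) (hFc : ∀ z, Fc z = (({i : Fin n | r i ≤ z}.ncard : ℝ)) / n) :
    (∀ k : ℕ, k ≤ n → ∀ ε : ℝ, 0 < ε → ε ≤ 1 / (n : ℝ) →
      (k : ℝ) / n = Fc (((n : ℝ) / ((n : ℝ) - 1)) * ((k : ℝ) / n - ε))) ∧
    {x : Fin n → ℝ | (∀ i, x i = 1 ∨ x i = -1) ∧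
      ∀ (i : Fin n) (y : ℝ), (y = 1 ∨ y = -1) →
        coordU d i (Function.update x i y) ≤ coordU d i x}.ncard = n + 1 := by
  classical
  have hn0 : (0:ℝ) < n := by positivity
  have hc : (0:ℝ) < (n:ℝ) - 1 := by
    have : (2:ℝ) ≤ n := by exact_mod_cast hn
    linarith
  constructor
  · -- Part 1
    intro k hk ε hε hε'
    have hnε1 : (n:ℝ) * ε ≤ 1 := by
      rw [le_div_iff₀ hn0] at hε'; linarith
    have hnε0 : 0 < (n:ℝ) * ε := by positivity
    rw [hFc]
    have hset : {i : Fin n | r i ≤ ((n : ℝ) / ((n : ℝ) - 1)) * ((k : ℝ) / n - ε)}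
        = ↑(Finset.univ.filter (fun i : Fin n => (i:ℕ) < k)) := by
      ext i
      simp only [Set.mem_setOf_eq, Finset.coe_filter, mem_univ, true_and, hr]
      have heq : ((n : ℝ) / ((n : ℝ) - 1)) * ((k : ℝ) / n - ε)
          = ((k:ℝ) - (n:ℝ) * ε) / ((n:ℝ) - 1) := by
        field_simp
      rw [heq, div_le_div_iff_of_pos_right hc]
      constructor
      · intro h
        have : (i:ℝ) < k := by linarith
        exact_mod_cast this
      · intro h
        have : (i:ℝ) + 1 ≤ k := by exact_mod_cast h
        linarith
    rw [hset, Set.ncard_coe_finset, card_filter_lt_fin hk]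
  · -- Part 2
    set xf : ℕ → (Fin n → ℝ) := fun k i => if (i:ℕ) < k then 1 else -1 with hxf
    have hmain : {x : Fin n → ℝ | (∀ i, x i = 1 ∨ x i = -1) ∧
        ∀ (i : Fin n) (y : ℝ), (y = 1 ∨ y = -1) →
          coordU d i (Function.update x i y) ≤ coordU d i x}
        = xf '' (Set.Iic n) := by
      ext x
      simp only [Set.mem_setOf_eq, Set.mem_image, Set.mem_Iic]
      constructor
      · rintro ⟨hpm, hbr⟩
        set m := (Finset.univ.filter (fun i => x i = 1)).card with hm
        have hmn : m ≤ n := by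
          have := Finset.card_filter_le Finset.univ (fun i => x i = 1)
          simpa using this
        refine ⟨m, hmn, ?_⟩
        have hT := sum_pm x hpm
        have hK := (equi_iff d x hpm).mp hbr
        funext i
        have hKi := hK i
        rw [hT, hd i] at hKi
        by_cases hi : (i:ℕ) < m
        · have : xf m i = 1 := by simp [hxf, hi]
          rw [this]
          rcases hpm i with h1 | h1
          · exact h1.symm
          · exfalso
            rw [h1] at hKi
            have : (m:ℝ) ≤ i := by nlinarith
            have : m ≤ (i:ℕ) := by exact_mod_cast this
            omega
        · have : xf m i = -1 := by simp [hxf, hi]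
          rw [this]
          rcases hpm i with h1 | h1
          · exfalso
            rw [h1] at hKi
            have : (i:ℝ) + 1 ≤ m := by nlinarith
            have : (i:ℕ) + 1 ≤ m := by exact_mod_cast this
            omega
          · exact h1.symm
      · rintro ⟨k, hk, rfl⟩
        have hpm : ∀ i, xf k i = 1 ∨ xf k i = -1 := by
          intro i; by_cases hi : (i:ℕ) < k <;> simp [hxf, hi]
        refine ⟨hpm, (equi_iff d (xf k) hpm).mpr ?_⟩
        intro i
        have hfilter : (Finset.univ.filter (fun i => xf k i = 1))
            = (Finset.univ.filter (fun i : Fin n => (i:ℕ) < k)) := by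
          apply Finset.filter_congr
          intro i _
          by_cases hi : (i:ℕ) < k <;> simp [hxf, hi] <;> norm_num
        have hT : ∑ j, xf k j = 2 * (k:ℝ) - n := by
          rw [sum_pm (xf k) hpm, hfilter, card_filter_lt_fin hk]
        rw [hT, hd i]
        by_cases hi : (i:ℕ) < k
        · have hx : xf k i = 1 := by simp [hxf, hi]
          have : (i:ℝ) + 1 ≤ k := by exact_mod_cast hi
          rw [hx]; nlinarith
        · have hx : xf k i = -1 := by simp [hxf, hi]
          have : (k:ℝ) ≤ i := by exact_mod_cast Nat.le_of_not_lt hi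
          rw [hx]; nlinarith
    rw [hmain]
    have hinj : Set.InjOn xf (Set.Iic n) := by
      intro a ha b hb h
      by_contra hne
      rcases Nat.lt_or_ge a b with hab | hab
      · have han : a < n := lt_of_lt_of_le hab hb
        have := congrFun h ⟨a, han⟩
        simp only [hxf] at this
        rw [if_neg (lt_irrefl a), if_pos hab] at this
        norm_num at this
      · have hba : b < a := by omega
        have hbn : b < n := lt_of_lt_of_le hba ha
        have := congrFun h ⟨b, hbn⟩
        simp only [hxf] at this
        rw [if_pos hba, if_neg (lt_irrefl b)] at this
        norm_num at this
    rw [Set.ncard_image_of_injOn hinj, ← Finset.coe_Iic, Set.ncard_coe_finset, Nat.card_Iic]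
end

section
/- If z* ∈ {0, 1/n, …, 1} satisfies z* − 1/n < G_a((n/(n−1))(z* − 1/n)) and z* ≥ G_a((n/(n−1))z*), then z* satisfies the Nash equilibrium condition: G_a((n/(n−1))(z* − ε)) ≥ z* ≥ G_a((n/(n−1))z*) for every ε ∈ (1/n, 2/n]. -/
/-- Threshold CCDF. -/
noncomputable def Ga {n : ℕ} (r : Fin n → ℝ) (z : ℝ) : ℝ :=
  ({i : Fin n | r i > z}.ncard : ℝ) / n

lemma Ga_anti' {n : ℕ} (r : Fin n → ℝ) {z₁ z₂ : ℝ} (h : z₁ ≤ z₂) :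
    Ga r z₂ ≤ Ga r z₁ := by
  unfold Ga
  gcongr ?_ / _
  exact_mod_cast Set.ncard_le_ncard (fun i hi => lt_of_le_of_lt h hi) (Set.toFinite _)

/-- A grid point z* = k/n with z*−1/n < G_a((n/(n−1))(z*−1/n)) and
z* ≥ G_a((n/(n−1))z*) satisfies the full Nash-equilibrium condition. -/
theorem candidate_is_solution {n : ℕ} (hn : 2 ≤ n) (r : Fin n → ℝ)
    (k : ℕ) (hk : k ≤ n)
    (h1 : (k : ℝ) / n - 1 / (n : ℝ) <
      Ga r (((n : ℝ) / ((n : ℝ) - 1)) * ((k : ℝ) / n - 1 / (n : ℝ))))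
    (h2 : (k : ℝ) / n ≥ Ga r (((n : ℝ) / ((n : ℝ) - 1)) * ((k : ℝ) / n))) :
    ∀ ε : ℝ, 1 / (n : ℝ) < ε → ε ≤ 2 / (n : ℝ) →
      Ga r (((n : ℝ) / ((n : ℝ) - 1)) * ((k : ℝ) / n - ε)) ≥ (k : ℝ) / n ∧
      (k : ℝ) / n ≥ Ga r (((n : ℝ) / ((n : ℝ) - 1)) * ((k : ℝ) / n)) := by
  intro ε hε1 hε2
  have hn0 : (0:ℝ) < n := by positivity
  have hn1 : (0:ℝ) < (n:ℝ) - 1 := by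
    have : (2:ℝ) ≤ n := by exact_mod_cast hn
    linarith
  refine ⟨?_, h2⟩
  set m := ({i : Fin n | r i > ((n : ℝ) / ((n : ℝ) - 1)) * ((k : ℝ) / n - 1 / (n : ℝ))}.ncard) with hm
  have hGa : Ga r (((n : ℝ) / ((n : ℝ) - 1)) * ((k : ℝ) / n - 1 / (n : ℝ))) = (m:ℝ)/n := rfl
  rw [hGa] at h1
  have hkm : (k:ℝ) ≤ m := by
    have hlt : (k:ℝ) - 1 < m := by
      have h1' := mul_lt_mul_of_pos_right h1 hn0
      field_simp at h1'
      linarith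
    have : (k:ℤ) - 1 < (m:ℤ) := by exact_mod_cast hlt
    exact_mod_cast by omega
  have hle : (k:ℝ)/n ≤ Ga r (((n : ℝ) / ((n : ℝ) - 1)) * ((k : ℝ) / n - 1 / (n : ℝ))) := by
    rw [hGa]; gcongr
  refine le_trans hle (Ga_anti' r ?_)
  have h3 : (k:ℝ)/n - ε ≤ (k:ℝ)/n - 1/n := by linarith
  nlinarith [div_pos hn0 hn1]
end

section
/- In the anti-coordination game, the set Z of fractions z ∈ {0, 1/n, …, 1} satisfying the Nash equilibrium condition G_a((n/(n−1))(z − ε)) ≥ z ≥ G_a((n/(n−1))z) for all ε ∈ (1/n, 2/n] has cardinality 1 ≤ |Z| ≤ 2, and if |Z| = 2 the two elements differ by exactly 1/n. -/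
namespace AntiCoordAux

variable {n : ℕ} (r : Fin n → ℝ)

/-- strict count -/
noncomputable def cnt (z : ℝ) : ℕ := {i : Fin n | r i > z}.ncard
/-- weak count -/
noncomputable def cntGe (z : ℝ) : ℕ := {i : Fin n | r i ≥ z}.ncard

lemma cnt_mono {z w : ℝ} (h : z ≤ w) : cnt r w ≤ cnt r z :=
  Set.ncard_le_ncard (fun i hi => h.trans_lt hi) (Set.toFinite _)

lemma cnt_le_cntGe (z : ℝ) : cnt r z ≤ cntGe r z :=
  Set.ncard_le_ncard (fun i (hi : r i > z) => le_of_lt hi) (Set.toFinite _)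

lemma cntGe_le_cnt {z w : ℝ} (h : w < z) : cntGe r z ≤ cnt r w :=
  Set.ncard_le_ncard (fun i hi => h.trans_le hi) (Set.toFinite _)

lemma cnt_le (z : ℝ) : cnt r z ≤ n := by
  have := Set.ncard_le_ncard (Set.subset_univ {i : Fin n | r i > z}) (Set.toFinite _)
  simpa [cnt, Set.ncard_univ] using this

lemma Ga_eq (z : ℝ) : Ga r z = (cnt r z : ℝ) / n := rfl

lemma Ga_ge_iff (hn : 0 < n) (k : ℕ) (z : ℝ) :
    (k : ℝ) / n ≤ Ga r z ↔ k ≤ cnt r z := by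
  rw [Ga_eq, div_le_div_iff_of_pos_right (by exact_mod_cast hn), Nat.cast_le]

lemma Ga_le_iff (hn : 0 < n) (k : ℕ) (z : ℝ) :
    Ga r z ≤ (k : ℝ) / n ↔ cnt r z ≤ k := by
  rw [Ga_eq, div_le_div_iff_of_pos_right (by exact_mod_cast hn), Nat.cast_le]

end AntiCoordAux

open AntiCoordAux

/-- The set of equilibrium fractions of the anti-coordination game has one or
two elements, and in the latter case they are consecutive grid points. -/
theorem antiCoord_solution_set_card {n : ℕ} (hn : 2 ≤ n) (r : Fin n → ℝ)
    (Z : Set ℕ)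
    (hZ : Z = {k : ℕ | k ≤ n ∧ ∀ ε : ℝ, 1 / (n : ℝ) < ε → ε ≤ 2 / (n : ℝ) →
      Ga r (((n : ℝ) / ((n : ℝ) - 1)) * ((k : ℝ) / n - ε)) ≥ (k : ℝ) / n ∧
      (k : ℝ) / n ≥ Ga r (((n : ℝ) / ((n : ℝ) - 1)) * ((k : ℝ) / n))}) :
    1 ≤ Z.ncard ∧ Z.ncard ≤ 2 ∧ (Z.ncard = 2 → ∃ k : ℕ, Z = {k, k + 1}) := by
  classical
  have hn0 : 0 < n := by omega
  have hnr : (2 : ℝ) ≤ (n : ℝ) := by exact_mod_cast hn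
  have hnr0 : (0 : ℝ) < n := by linarith
  have hnr1 : (0 : ℝ) < (n : ℝ) - 1 := by linarith
  set c : ℝ := (n : ℝ) / ((n : ℝ) - 1) with hc_def
  have hc : 0 < c := div_pos hnr0 hnr1
  have hcne : c ≠ 0 := ne_of_gt hc
  have hne : (n : ℝ) ≠ 0 := ne_of_gt hnr0
  have hne1 : (n : ℝ) - 1 ≠ 0 := ne_of_gt hnr1
  -- key identity : c * (k/n - 1/n) = (k-1)/(n-1), c * (k/n) = k/(n-1)
  have key1 : ∀ k : ℕ, c * ((k : ℝ) / n - 1 / n) = ((k : ℝ) - 1) / ((n : ℝ) - 1) := by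
    intro k; rw [hc_def]; field_simp
  have key2 : ∀ k : ℕ, c * ((k : ℝ) / n) = (k : ℝ) / ((n : ℝ) - 1) := by
    intro k; rw [hc_def]; field_simp
  -- characterization of membership in Z
  have hchar : ∀ k : ℕ, k ∈ Z ↔ k ≤ n ∧
      k ≤ cntGe r (((k : ℝ) - 1) / ((n : ℝ) - 1)) ∧
      cnt r ((k : ℝ) / ((n : ℝ) - 1)) ≤ k := by
    intro k
    set t : ℝ := ((k : ℝ) - 1) / ((n : ℝ) - 1) with ht_def
    rw [hZ]
    simp only [Set.mem_setOf_eq]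
    constructor
    · rintro ⟨hkn, H⟩
      refine ⟨hkn, ?_, ?_⟩
      · -- pick ε just above 1/n
        set d : ℝ := c / (2 * n) with hd_def
        have hd : 0 < d := by positivity
        set S : Finset (Fin n) := Finset.univ.filter (fun i => r i < t) with hS_def
        set A : Finset ℝ := insert (t - d) (S.image r) with hA_def
        have hAne : A.Nonempty := ⟨t - d, Finset.mem_insert_self _ _⟩
        set M : ℝ := A.max' hAne with hM_def
        have hMlt : M < t := by
          rw [hM_def]
          apply Finset.max'_lt_iff A hAne |>.mpr
          intro y hy
          rw [hA_def] at hy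
          rcases Finset.mem_insert.mp hy with h | h
          · rw [h]; linarith
          · obtain ⟨i, hi, rfl⟩ := Finset.mem_image.mp h
            exact (Finset.mem_filter.mp hi).2
        have hMge : t - d ≤ M := Finset.le_max' _ _ (Finset.mem_insert_self _ _)
        set z : ℝ := (M + t) / 2 with hz_def
        have hzlt : z < t := by rw [hz_def]; linarith
        have hzM : M < z := by rw [hz_def]; linarith
        have hzge : t - 2 * d ≤ z := by rw [hz_def]; linarith
        set ε : ℝ := (k : ℝ) / n - z / c with hε_def
        have hkey : (k : ℝ) / n - 1 / n = t / c := by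
          rw [eq_div_iff hcne, mul_comm, key1 k]
        have hε1 : 1 / (n : ℝ) < ε := by
          have : ε - 1 / n = (t - z) / c := by
            rw [hε_def]; rw [sub_div]; linarith [hkey]
          have hpos : 0 < (t - z) / c := div_pos (by linarith) hc
          linarith
        have hε2 : ε ≤ 2 / (n : ℝ) := by
          have h1 : ε - 1 / n = (t - z) / c := by
            rw [hε_def]; rw [sub_div]; linarith [hkey]
          have h2d : 2 * d = c / n := by rw [hd_def]; ring
          have h3 : (t - z) / c ≤ (c / (n : ℝ)) / c := by gcongr; linarith
          have h4 : (c / (n : ℝ)) / c = 1 / (n : ℝ) := by field_simp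
          have h5 : (2 : ℝ) / n = 1 / n + 1 / n := by ring
          linarith
        have harg : c * ((k : ℝ) / n - ε) = z := by
          have hzz : (k : ℝ) / n - ε = z / c := by rw [hε_def]; ring
          rw [hzz]; field_simp
        have := (H ε hε1 hε2).1
        rw [harg] at this
        have hk : k ≤ cnt r z := (Ga_ge_iff r hn0 k z).mp this
        refine hk.trans ?_
        apply Set.ncard_le_ncard ?_ (Set.toFinite _)
        intro i hi
        simp only [Set.mem_setOf_eq] at hi ⊢
        by_contra hcon
        push_neg at hcon
        have hiS : i ∈ S := by rw [hS_def]; simp [hcon]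
        have hrA : r i ∈ A := by
          rw [hA_def]; exact Finset.mem_insert_of_mem (Finset.mem_image_of_mem r hiS)
        have : r i ≤ M := Finset.le_max' _ _ hrA
        linarith
      · have h12 : (1 : ℝ) / n < 2 / n := by
          rw [div_lt_div_iff₀ hnr0 hnr0]; linarith
        have := (H (2 / n) h12 le_rfl).2
        rw [key2 k] at this
        exact (Ga_le_iff r hn0 k _).mp this
    · rintro ⟨hkn, hF, hG⟩
      refine ⟨hkn, fun ε hε1 hε2 => ⟨?_, ?_⟩⟩
      · have harg : c * ((k : ℝ) / n - ε) < t := by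
          rw [ht_def, ← key1 k]
          apply mul_lt_mul_of_pos_left _ hc
          linarith
        apply (Ga_ge_iff r hn0 k _).mpr
        exact hF.trans (cntGe_le_cnt r harg)
      · rw [key2 k]
        exact (Ga_le_iff r hn0 k _).mpr hG
  -- the minimal crossing point
  have hGmono : ∀ {a b : ℕ}, a ≤ b →
      cnt r ((b : ℝ) / ((n : ℝ) - 1)) ≤ cnt r ((a : ℝ) / ((n : ℝ) - 1)) := by
    intro a b hab
    apply cnt_mono
    have hab' : (a : ℝ) ≤ b := by exact_mod_cast hab
    gcongr
  have hex : ∃ k : ℕ, cnt r ((k : ℝ) / ((n : ℝ) - 1)) ≤ k := ⟨n, cnt_le r _⟩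
  set K : ℕ := Nat.find hex with hK_def
  have hKn : K ≤ n := Nat.find_min' hex (cnt_le r _)
  have hKG : cnt r ((K : ℝ) / ((n : ℝ) - 1)) ≤ K := Nat.find_spec hex
  have hKF : K ≤ cntGe r (((K : ℝ) - 1) / ((n : ℝ) - 1)) := by
    rcases Nat.eq_zero_or_pos K with h0 | hpos
    · simp [h0]
    · obtain ⟨m, hKm⟩ : ∃ m, K = m + 1 := ⟨K - 1, by omega⟩
      have hmin : ¬ cnt r ((m : ℝ) / ((n : ℝ) - 1)) ≤ m :=
        Nat.find_min hex (by omega)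
      have h1 : m + 1 ≤ cnt r ((m : ℝ) / ((n : ℝ) - 1)) := by omega
      have hcast : (K : ℝ) - 1 = (m : ℝ) := by rw [hKm]; push_cast; ring
      rw [hcast, hKm]
      exact h1.trans (cnt_le_cntGe r _)
  have hmem : K ∈ Z := (hchar K).mpr ⟨hKn, hKF, hKG⟩
  have hsub : Z ⊆ {K, K + 1} := by
    intro k hk
    obtain ⟨hkn, hFk, hGk⟩ := (hchar k).mp hk
    have h1 : K ≤ k := Nat.find_min' hex hGk
    by_contra hcon
    simp only [Set.mem_insert_iff, Set.mem_singleton_iff] at hcon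
    push_neg at hcon
    have hk2 : K + 2 ≤ k := by omega
    have hlt : ((k - 2 : ℕ) : ℝ) / ((n : ℝ) - 1) < ((k : ℝ) - 1) / ((n : ℝ) - 1) := by
      have : ((k - 2 : ℕ) : ℝ) = (k : ℝ) - 2 := by
        have : (2 : ℕ) ≤ k := by omega
        push_cast [Nat.cast_sub this]; ring
      rw [this]
      gcongr <;> linarith
    have h2 : cntGe r (((k : ℝ) - 1) / ((n : ℝ) - 1)) ≤ cnt r (((k - 2 : ℕ) : ℝ) / ((n : ℝ) - 1)) :=
      cntGe_le_cnt r hlt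
    have h3 : cnt r (((k - 2 : ℕ) : ℝ) / ((n : ℝ) - 1)) ≤ cnt r ((K : ℝ) / ((n : ℝ) - 1)) :=
      hGmono (by omega)
    omega
  have hfin2 : ({K, K + 1} : Set ℕ).Finite := (Set.finite_singleton _).insert _
  have hfin : Z.Finite := hfin2.subset hsub
  have hcard2 : ({K, K + 1} : Set ℕ).ncard ≤ 2 := by
    refine (Set.ncard_insert_le _ _).trans ?_
    simp
  refine ⟨?_, ?_, ?_⟩
  · have : 0 < Z.ncard := (Set.ncard_pos hfin).mpr ⟨K, hmem⟩
    omega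
  · exact (Set.ncard_le_ncard hsub hfin2).trans hcard2
  · intro h2
    exact ⟨K, Set.eq_of_subset_of_ncard_le hsub (by omega) hfin2⟩
end
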